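/- Let Σ = {a, b, c} and let ~ be the smallest congruence on Σ* such that ab ~ ba and ac ~ ca (i.e., the letter a commutes with b and with c, while b and c do not commute). For w ∈ Σ*, let N(w) denote the signed number of factorizations of w into factors from {a, b, c, ba, ca}: N(w) = Σ (−1)^{#{i : uᵢ ∈ {ba, ca}}}, the sum ranging over all finite sequences (u₁, …, u_k) of words with each uᵢ ∈ {a, b, c, ba, ca} and u₁⋯u_k = w. Then N(w) ∈ {0, 1} for every w ∈ Σ*, and every ~-equivalence class of Σ* contains exactly one word w with N(w) = 1. -/

import Mathlib

/-- The three-letter alphabet `{a, b, c}`. -/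
inductive ABC : Type
  | a
  | b
  | c
deriving DecidableEq

open ABC

/-- One swap of an adjacent commuting pair: `a` commutes with `b` and with `c`. -/
inductive CommStep : List ABC → List ABC → Prop
  | swap_ab (u v : List ABC) : CommStep (u ++ a :: b :: v) (u ++ b :: a :: v)
  | swap_ac (u v : List ABC) : CommStep (u ++ a :: c :: v) (u ++ c :: a :: v)

/-- The smallest congruence `~` on `Σ*` with `ab ~ ba` and `ac ~ ca`:
the equivalence relation generated by swaps of adjacent commuting pairs. -/
def traceEquiv : List ABC → List ABC → Prop :=
  Relation.EqvGen CommStep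

/-- `N(w)`: the signed number of factorizations of `w` into factors from
`{a, b, c, ba, ca}`, a factorization counting with sign
`(-1)^(number of factors in {ba, ca})`. -/
noncomputable def signedFactorCount (w : List ABC) : ℤ :=
  ∑ᶠ l ∈ {l : List (List ABC) |
      (∀ u ∈ l, u = [a] ∨ u = [b] ∨ u = [c] ∨ u = [b, a] ∨ u = [c, a]) ∧
        l.flatten = w},
    (-1 : ℤ) ^ (l.countP (fun u => u = [b, a] ∨ u = [c, a]))

/- ### Auxiliary development -/

/-- The factor set condition. -/
abbrev Fac (u : List ABC) : Prop :=
  u = [a] ∨ u = [b] ∨ u = [c] ∨ u = [b, a] ∨ u = [c, a]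

/-- The sign of a factorization. -/
abbrev sgn (l : List (List ABC)) : ℤ :=
  (-1 : ℤ) ^ (l.countP (fun u => u = [b, a] ∨ u = [c, a]))

/-- Enumeration of all factorizations of a word. -/
def facs : List ABC → List (List (List ABC))
  | [] => [[]]
  | a :: t => (facs t).map ([a] :: ·)
  | b :: [] => [[[b]]]
  | b :: a :: t => ((facs (a :: t)).map ([b] :: ·)) ++ (facs t).map ([b, a] :: ·)
  | b :: b :: t => (facs (b :: t)).map ([b] :: ·)
  | b :: c :: t => (facs (c :: t)).map ([b] :: ·)
  | c :: [] => [[[c]]]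
  | c :: a :: t => ((facs (a :: t)).map ([c] :: ·)) ++ (facs t).map ([c, a] :: ·)
  | c :: b :: t => (facs (b :: t)).map ([c] :: ·)
  | c :: c :: t => (facs (c :: t)).map ([c] :: ·)

/-- Normal form test: no `a` after a `b` or `c`. -/
def isNF : List ABC → Bool
  | [] => true
  | a :: t => isNF t
  | b :: [] => true
  | b :: a :: _ => false
  | b :: b :: t => isNF (b :: t)
  | b :: c :: t => isNF (c :: t)
  | c :: [] => true
  | c :: a :: _ => false
  | c :: b :: t => isNF (b :: t)
  | c :: c :: t => isNF (c :: t)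

lemma facs_sound : ∀ w l, l ∈ facs w → (∀ u ∈ l, Fac u) ∧ l.flatten = w := by
  intro w
  induction w using facs.induct with
  | case1 =>
    intro l hl
    simp only [facs, List.mem_singleton] at hl
    subst hl; simp
  | case2 t ih =>
    intro l hl
    simp only [facs, List.mem_map] at hl
    obtain ⟨m, hm, rfl⟩ := hl
    obtain ⟨h1, h2⟩ := ih m hm
    refine ⟨?_, by simp [h2]⟩
    rintro u hu
    rcases List.mem_cons.1 hu with rfl | hu
    · left; rfl
    · exact h1 u hu
  | case3 =>
    intro l hl
    simp only [facs, List.mem_singleton] at hl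
    subst hl
    refine ⟨?_, by simp⟩
    rintro u hu
    rcases List.mem_cons.1 hu with rfl | hu
    · right; left; rfl
    · simp at hu
  | case4 t ih1 ih2 =>
    intro l hl
    rw [facs.eq_4] at hl
    rcases List.mem_append.1 hl with h' | h' <;>
      obtain ⟨m, hm, rfl⟩ := List.mem_map.1 h'
    · obtain ⟨h1, h2⟩ := ih1 m hm
      refine ⟨?_, by simp [h2]⟩
      rintro u hu
      rcases List.mem_cons.1 hu with rfl | hu
      · right; left; rfl
      · exact h1 u hu
    · obtain ⟨h1, h2⟩ := ih2 m hm
      refine ⟨?_, by simp [h2]⟩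
      rintro u hu
      rcases List.mem_cons.1 hu with rfl | hu
      · right; right; right; left; rfl
      · exact h1 u hu
  | case5 t ih =>
    intro l hl
    simp only [facs, List.mem_map] at hl
    obtain ⟨m, hm, rfl⟩ := hl
    obtain ⟨h1, h2⟩ := ih m hm
    refine ⟨?_, by simp [h2]⟩
    rintro u hu
    rcases List.mem_cons.1 hu with rfl | hu
    · right; left; rfl
    · exact h1 u hu
  | case6 t ih =>
    intro l hl
    simp only [facs, List.mem_map] at hl
    obtain ⟨m, hm, rfl⟩ := hl
    obtain ⟨h1, h2⟩ := ih m hm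
    refine ⟨?_, by simp [h2]⟩
    rintro u hu
    rcases List.mem_cons.1 hu with rfl | hu
    · right; left; rfl
    · exact h1 u hu
  | case7 =>
    intro l hl
    simp only [facs, List.mem_singleton] at hl
    subst hl
    refine ⟨?_, by simp⟩
    rintro u hu
    rcases List.mem_cons.1 hu with rfl | hu
    · right; right; left; rfl
    · simp at hu
  | case8 t ih1 ih2 =>
    intro l hl
    rw [facs.eq_8] at hl
    rcases List.mem_append.1 hl with h' | h' <;>
      obtain ⟨m, hm, rfl⟩ := List.mem_map.1 h'
    · obtain ⟨h1, h2⟩ := ih1 m hm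
      refine ⟨?_, by simp [h2]⟩
      rintro u hu
      rcases List.mem_cons.1 hu with rfl | hu
      · right; right; left; rfl
      · exact h1 u hu
    · obtain ⟨h1, h2⟩ := ih2 m hm
      refine ⟨?_, by simp [h2]⟩
      rintro u hu
      rcases List.mem_cons.1 hu with rfl | hu
      · right; right; right; right; rfl
      · exact h1 u hu
  | case9 t ih =>
    intro l hl
    simp only [facs, List.mem_map] at hl
    obtain ⟨m, hm, rfl⟩ := hl
    obtain ⟨h1, h2⟩ := ih m hm
    refine ⟨?_, by simp [h2]⟩
    rintro u hu
    rcases List.mem_cons.1 hu with rfl | hu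
    · right; right; left; rfl
    · exact h1 u hu
  | case10 t ih =>
    intro l hl
    simp only [facs, List.mem_map] at hl
    obtain ⟨m, hm, rfl⟩ := hl
    obtain ⟨h1, h2⟩ := ih m hm
    refine ⟨?_, by simp [h2]⟩
    rintro u hu
    rcases List.mem_cons.1 hu with rfl | hu
    · right; right; left; rfl
    · exact h1 u hu

lemma facs_complete : ∀ l : List (List ABC), (∀ u ∈ l, Fac u) → l ∈ facs l.flatten := by
  intro l
  induction l with
  | nil => intro _; simp [facs]
  | cons u m ih =>
    intro h
    have hm := ih (fun v hv => h v (List.mem_cons_of_mem _ hv))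
    have hu := h u (List.mem_cons_self)
    rcases hu with rfl | rfl | rfl | rfl | rfl
    · show ([a] :: m) ∈ facs (a :: m.flatten)
      simp only [facs]
      exact List.mem_map_of_mem hm
    · show ([b] :: m) ∈ facs (b :: m.flatten)
      rcases hfm : m.flatten with _ | ⟨z, t⟩
      · rw [hfm] at hm
        simp only [facs, List.mem_singleton] at hm ⊢
        rw [hm]
      · rw [hfm] at hm
        cases z with
        | a =>
          rw [facs.eq_4]
          exact List.mem_append_left _ (List.mem_map_of_mem hm)
        | b =>
          rw [facs.eq_5]
          exact List.mem_map_of_mem hm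
        | c =>
          rw [facs.eq_6]
          exact List.mem_map_of_mem hm
    · show ([c] :: m) ∈ facs (c :: m.flatten)
      rcases hfm : m.flatten with _ | ⟨z, t⟩
      · rw [hfm] at hm
        simp only [facs, List.mem_singleton] at hm ⊢
        rw [hm]
      · rw [hfm] at hm
        cases z with
        | a =>
          rw [facs.eq_8]
          exact List.mem_append_left _ (List.mem_map_of_mem hm)
        | b =>
          rw [facs.eq_9]
          exact List.mem_map_of_mem hm
        | c =>
          rw [facs.eq_10]
          exact List.mem_map_of_mem hm
    · show ([b, a] :: m) ∈ facs (b :: a :: m.flatten)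
      rw [facs.eq_4]
      exact List.mem_append_right _ (List.mem_map_of_mem hm)
    · show ([c, a] :: m) ∈ facs (c :: a :: m.flatten)
      rw [facs.eq_8]
      exact List.mem_append_right _ (List.mem_map_of_mem hm)

lemma cons_inj (u : List ABC) : Function.Injective (u :: · : List (List ABC) → List (List ABC)) := by
  intro x y h; simpa using h

lemma facs_nodup : ∀ w, (facs w).Nodup := by
  intro w
  induction w using facs.induct with
  | case1 => simp [facs]
  | case2 t ih => simp only [facs]; exact ih.map (cons_inj _)
  | case3 => simp [facs]
  | case4 t ih1 ih2 =>
    rw [facs.eq_4]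
    refine List.Nodup.append (ih1.map (cons_inj _)) (ih2.map (cons_inj _)) ?_
    intro x hx hy
    rcases List.mem_map.1 hx with ⟨m, _, rfl⟩
    rcases List.mem_map.1 hy with ⟨m', _, h⟩
    simp at h
  | case5 t ih => simp only [facs]; exact ih.map (cons_inj _)
  | case6 t ih => simp only [facs]; exact ih.map (cons_inj _)
  | case7 => simp [facs]
  | case8 t ih1 ih2 =>
    rw [facs.eq_8]
    refine List.Nodup.append (ih1.map (cons_inj _)) (ih2.map (cons_inj _)) ?_
    intro x hx hy
    rcases List.mem_map.1 hx with ⟨m, _, rfl⟩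
    rcases List.mem_map.1 hy with ⟨m', _, h⟩
    simp at h
  | case9 t ih => simp only [facs]; exact ih.map (cons_inj _)
  | case10 t ih => simp only [facs]; exact ih.map (cons_inj _)

lemma sfc_eq (w : List ABC) : signedFactorCount w = ((facs w).map sgn).sum := by
  have hset : {l : List (List ABC) |
      (∀ u ∈ l, u = [a] ∨ u = [b] ∨ u = [c] ∨ u = [b, a] ∨ u = [c, a]) ∧
        l.flatten = w} = ↑(facs w).toFinset := by
    ext l
    simp only [Set.mem_setOf_eq, Finset.coe_sort_coe, List.coe_toFinset, List.mem_toFinset]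
    constructor
    · rintro ⟨h1, rfl⟩; exact facs_complete l h1
    · intro h; exact facs_sound w l h
  rw [signedFactorCount, hset, finsum_mem_coe_finset]
  exact List.sum_toFinset _ (facs_nodup w)

lemma sgn_cons (u : List ABC) (l : List (List ABC)) :
    sgn (u :: l) = (if (u = [b, a] ∨ u = [c, a]) then (-1 : ℤ) else 1) * sgn l := by
  by_cases h : (u = [b, a] ∨ u = [c, a]) <;>
    simp [sgn, List.countP_cons, h, pow_succ, mul_comm]

lemma sum_facs_cons (u : List ABC) (L : List (List (List ABC))) :
    ((L.map (u :: ·)).map sgn).sum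
      = (if (u = [b, a] ∨ u = [c, a]) then (-1 : ℤ) else 1) * ((L.map sgn).sum) := by
  induction L with
  | nil => simp
  | cons x L ih => simp only [List.map_cons, List.sum_cons, sgn_cons, ih]; ring

lemma nf_sum : ∀ w, ((facs w).map sgn).sum = if isNF w then 1 else 0 := by
  intro w
  induction w using facs.induct with
  | case1 => simp [facs, isNF, sgn]
  | case2 t ih =>
    simp only [facs, isNF, sum_facs_cons, ih]
    norm_num
    split_ifs <;> simp_all
  | case3 => simp [facs, isNF, sgn]
  | case4 t ih1 ih2 =>
    rw [facs.eq_4, List.map_append, List.sum_append, sum_facs_cons, sum_facs_cons, ih1, ih2,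
      isNF.eq_4]
    simp only [isNF]
    norm_num
    split <;> norm_num
    all_goals simp_all
  | case5 t ih =>
    simp only [facs, isNF, sum_facs_cons, ih]
    norm_num
    split_ifs <;> simp_all
  | case6 t ih =>
    simp only [facs, isNF, sum_facs_cons, ih]
    norm_num
    split_ifs <;> simp_all
  | case7 => simp [facs, isNF, sgn]
  | case8 t ih1 ih2 =>
    rw [facs.eq_8, List.map_append, List.sum_append, sum_facs_cons, sum_facs_cons, ih1, ih2,
      isNF.eq_8]
    simp only [isNF]
    norm_num
    split <;> norm_num
    all_goals simp_all
  | case9 t ih =>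
    simp only [facs, isNF, sum_facs_cons, ih]
    norm_num
    split_ifs <;> simp_all
  | case10 t ih =>
    simp only [facs, isNF, sum_facs_cons, ih]
    norm_num
    split_ifs <;> simp_all

lemma sfc_ite (w : List ABC) : signedFactorCount w = if isNF w then 1 else 0 := by
  rw [sfc_eq, nf_sum]

/- ### Trace equivalence invariants -/

/-- Projection away from `a`. -/
def proj (w : List ABC) : List ABC := w.filter (· ≠ a)

lemma commStep_inv {x y : List ABC} (h : CommStep x y) :
    x.count a = y.count a ∧ proj x = proj y := by
  cases h <;>
    constructor <;>
      simp [proj, List.count_append, List.count_cons, List.filter_append, List.filter_cons]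

lemma traceEquiv_inv {x y : List ABC} (h : traceEquiv x y) :
    x.count a = y.count a ∧ proj x = proj y := by
  have h' : Relation.EqvGen CommStep x y := h
  clear h
  induction h' with
  | rel _ _ h => exact commStep_inv h
  | refl _ => exact ⟨rfl, rfl⟩
  | symm _ _ _ ih => exact ⟨ih.1.symm, ih.2.symm⟩
  | trans _ _ _ _ _ ih1 ih2 => exact ⟨ih1.1.trans ih2.1, ih1.2.trans ih2.2⟩

lemma commStep_cons (z : ABC) {s t : List ABC} (h : CommStep s t) :
    CommStep (z :: s) (z :: t) := by
  cases h with
  | swap_ab u v => exact CommStep.swap_ab (z :: u) v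
  | swap_ac u v => exact CommStep.swap_ac (z :: u) v

lemma traceEquiv_cons (z : ABC) {s t : List ABC} (h : traceEquiv s t) :
    traceEquiv (z :: s) (z :: t) := by
  have h' : Relation.EqvGen CommStep s t := h
  clear h
  induction h' with
  | rel _ _ h => exact Relation.EqvGen.rel _ _ (commStep_cons z h)
  | refl _ => exact Relation.EqvGen.refl _
  | symm _ _ _ ih => exact Relation.EqvGen.symm _ _ ih
  | trans _ _ _ _ _ ih1 ih2 => exact Relation.EqvGen.trans _ _ _ ih1 ih2

lemma moveA (z : ABC) (hz : z = b ∨ z = c) :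
    ∀ (k : ℕ) (s : List ABC),
      traceEquiv (z :: (List.replicate k a ++ s)) (List.replicate k a ++ z :: s) := by
  intro k
  induction k with
  | zero => intro s; exact Relation.EqvGen.refl _
  | succ k ih =>
    intro s
    have h1 : traceEquiv (z :: a :: (List.replicate k a ++ s))
        (a :: z :: (List.replicate k a ++ s)) := by
      rcases hz with rfl | rfl
      · exact Relation.EqvGen.symm _ _
          (Relation.EqvGen.rel _ _ (CommStep.swap_ab [] (List.replicate k a ++ s)))
      · exact Relation.EqvGen.symm _ _
          (Relation.EqvGen.rel _ _ (CommStep.swap_ac [] (List.replicate k a ++ s)))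
    have h2 := traceEquiv_cons a (ih s)
    have e1 : z :: (List.replicate (k + 1) a ++ s) = z :: a :: (List.replicate k a ++ s) := by
      simp [List.replicate_succ]
    have e2 : List.replicate (k + 1) a ++ z :: s = a :: (List.replicate k a ++ z :: s) := by
      simp [List.replicate_succ]
    rw [e1, e2]
    exact Relation.EqvGen.trans _ _ _ h1 h2

lemma toNF : ∀ w : List ABC,
    traceEquiv w (List.replicate (w.count a) a ++ proj w) := by
  intro w
  induction w with
  | nil => exact Relation.EqvGen.refl _
  | cons z t ih =>
    cases z with
    | a =>
      have h1 := traceEquiv_cons a ih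
      have e : List.replicate ((a :: t).count a) a ++ proj (a :: t)
          = a :: (List.replicate (t.count a) a ++ proj t) := by
        simp [proj, List.count_cons, List.filter_cons, List.replicate_succ]
      rw [e]; exact h1
    | b =>
      have h1 := traceEquiv_cons b ih
      have h2 := moveA b (Or.inl rfl) (t.count a) (proj t)
      have e : List.replicate ((b :: t).count a) a ++ proj (b :: t)
          = List.replicate (t.count a) a ++ b :: proj t := by
        simp [proj, List.count_cons, List.filter_cons]
      rw [e]
      exact Relation.EqvGen.trans _ _ _ h1 h2
    | c =>
      have h1 := traceEquiv_cons c ih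
      have h2 := moveA c (Or.inr rfl) (t.count a) (proj t)
      have e : List.replicate ((c :: t).count a) a ++ proj (c :: t)
          = List.replicate (t.count a) a ++ c :: proj t := by
        simp [proj, List.count_cons, List.filter_cons]
      rw [e]
      exact Relation.EqvGen.trans _ _ _ h1 h2

lemma head_ne_a {k : ℕ} {r t : List ABC} {z : ABC} (hz : z ≠ a)
    (h : z :: t = List.replicate k a ++ r) : k = 0 := by
  cases k with
  | zero => rfl
  | succ k =>
    rw [List.replicate_succ] at h
    simp only [List.cons_append, List.cons.injEq] at h
    exact absurd h.1 hz

lemma step_ne (x y : ABC) (t : List ABC) (hx : x ≠ a) (hy : y ≠ a)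
    (ht : y :: t = List.replicate ((y :: t).count a) a ++ proj (y :: t)) :
    x :: y :: t = List.replicate ((x :: y :: t).count a) a ++ proj (x :: y :: t) := by
  have hk : (y :: t).count a = 0 := head_ne_a hy ht
  rw [hk] at ht
  simp only [List.replicate_zero, List.nil_append] at ht
  have e1 : (x :: y :: t).count a = 0 := by
    simp [List.count_cons, hx, hy] at hk ⊢
    simpa [List.count_cons, hy] using hk
  have e2 : proj (x :: y :: t) = x :: proj (y :: t) := by
    simp [proj, List.filter_cons, hx]
  rw [e1, e2, ← ht]
  simp

lemma nf_shape : ∀ w, isNF w = true → w = List.replicate (w.count a) a ++ proj w := by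
  intro w
  induction w using isNF.induct with
  | case1 => intro _; simp [proj]
  | case2 t ih =>
    intro h
    have h' : isNF t = true := by simpa [isNF] using h
    have e : List.replicate ((a :: t).count a) a ++ proj (a :: t)
        = a :: (List.replicate (t.count a) a ++ proj t) := by
      simp [proj, List.count_cons, List.filter_cons, List.replicate_succ]
    rw [e, ← ih h']
  | case3 => intro _; decide
  | case4 t => intro h; simp [isNF] at h
  | case5 t ih =>
    intro h
    have h' : isNF (b :: t) = true := by simpa [isNF] using h
    exact step_ne b b t (by simp) (by simp) (ih h')
  | case6 t ih =>
    intro h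
    have h' : isNF (c :: t) = true := by simpa [isNF] using h
    exact step_ne b c t (by simp) (by simp) (ih h')
  | case7 => intro _; decide
  | case8 t => intro h; simp [isNF] at h
  | case9 t ih =>
    intro h
    have h' : isNF (b :: t) = true := by simpa [isNF] using h
    exact step_ne c b t (by simp) (by simp) (ih h')
  | case10 t ih =>
    intro h
    have h' : isNF (c :: t) = true := by simpa [isNF] using h
    exact step_ne c c t (by simp) (by simp) (ih h')

lemma noA_nf : ∀ s : List ABC, a ∉ s → isNF s = true := by
  intro s
  induction s with
  | nil => intro _; rfl
  | cons z t ih =>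
    intro h
    have hz : z ≠ a := fun e => h (e ▸ List.mem_cons_self)
    have ht : a ∉ t := fun e => h (List.mem_cons_of_mem _ e)
    have h' := ih ht
    cases z with
    | a => exact absurd rfl hz
    | b =>
      cases t with
      | nil => rfl
      | cons y t' =>
        cases y with
        | a => exact absurd (List.mem_cons_self) ht
        | b => simpa [isNF] using h'
        | c => simpa [isNF] using h'
    | c =>
      cases t with
      | nil => rfl
      | cons y t' =>
        cases y with
        | a => exact absurd (List.mem_cons_self) ht
        | b => simpa [isNF] using h'
        | c => simpa [isNF] using h'

lemma rep_nf : ∀ (k : ℕ) (s : List ABC), a ∉ s → isNF (List.replicate k a ++ s) = true := by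
  intro k
  induction k with
  | zero => intro s hs; simpa using noA_nf s hs
  | succ k ih =>
    intro s hs
    rw [List.replicate_succ, List.cons_append]
    simpa [isNF] using ih s hs

lemma a_not_mem_proj (w : List ABC) : a ∉ proj w := by
  simp [proj, List.mem_filter]

/-- Cartier–Foata theorem for `{a,b,c}` with `a` commuting with `b` and `c`:
`N(w) ∈ {0, 1}` for all `w`, and every trace class contains exactly one word `w`
with `N(w) = 1`. -/
theorem cartier_foata_abc :
    (∀ w : List ABC, signedFactorCount w = 0 ∨ signedFactorCount w = 1) ∧
    (∀ w : List ABC, ∃! v : List ABC, traceEquiv v w ∧ signedFactorCount v = 1) := by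
  constructor
  · intro w
    rw [sfc_ite]
    split
    · exact Or.inr rfl
    · exact Or.inl rfl
  · intro w
    refine ⟨List.replicate (w.count a) a ++ proj w,
      ⟨Relation.EqvGen.symm _ _ (toNF w), ?_⟩, ?_⟩
    · rw [sfc_ite, rep_nf _ _ (a_not_mem_proj w)]
      rfl
    · rintro v ⟨hv, hN⟩
      have hnf : isNF v = true := by
        rw [sfc_ite] at hN
        by_contra hc
        simp [hc] at hN
      have hs := nf_shape v hnf
      obtain ⟨hc, hp⟩ := traceEquiv_inv hv
      rw [hs, hc, hp]
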